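/- arXiv:1501.06851 — 2 statements merged into one kernel-verified Lean document; each statement's English description precedes it below -/
import Mathlib

section
/- For an asynchronous iteration where at each step k an arbitrary nonempty subset S(k) ⊆ {1,…,n} of coordinates is updated via x_i(k+1) = (N + M·x(k))_i for i ∈ S(k) and x_i(k+1) = x_i(k) otherwise, if M is a nonnegative matrix with ρ(M) < 1 and every coordinate is updated infinitely often, then x(k) converges to the fixed point x* = (I−M)^{-1}·N. -/
open Matrix Filter Finset

/-- If the spectral radius of a real matrix (viewed over `ℂ`) is less than `1`,
then some power of it has all row sums at most `1/2`. -/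
lemma stmt14_aux_rowsum {n : ℕ} (M : Matrix (Fin n) (Fin n) ℝ)
    (hρ : spectralRadius ℂ (M.map (fun x => (x : ℂ))) < 1) :
    ∃ K, 1 ≤ K ∧ ∀ i, ∑ j, (M ^ K) i j ≤ 1/2 := by
  letI : NormedRing (Matrix (Fin n) (Fin n) ℂ) := Matrix.linftyOpNormedRing
  letI : NormedAlgebra ℂ (Matrix (Fin n) (Fin n) ℂ) := Matrix.linftyOpNormedAlgebra
  set B : Matrix (Fin n) (Fin n) ℂ := M.map (fun x => (x : ℂ)) with hB
  have hmap : ∀ k : ℕ, B ^ k = (M ^ k).map (fun x => (x : ℂ)) := by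
    intro k
    have : B = Complex.ofRealHom.mapMatrix M := by
      ext i j; simp [hB, RingHom.mapMatrix_apply]
    rw [this, ← map_pow]
    ext i j; simp [RingHom.mapMatrix_apply]
  have hrow : ∀ (k : ℕ) (i : Fin n), ∑ j, (M ^ k) i j ≤ ‖B ^ k‖ := by
    intro k i
    have h1 : ∑ j, (M ^ k) i j ≤ ∑ j, ‖(B ^ k) i j‖ := by
      apply Finset.sum_le_sum
      intro j _
      rw [hmap]
      simp only [Matrix.map_apply, Complex.norm_real]
      exact le_abs_self _
    refine h1.trans ?_
    have h2 : ((∑ j, ‖(B ^ k) i j‖₊ : NNReal) : ℝ) ≤ ‖B ^ k‖ := by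
      rw [Matrix.linfty_opNorm_def]
      exact_mod_cast NNReal.coe_le_coe.mpr
        (Finset.le_sup (f := fun i => ∑ j, ‖(B ^ k) i j‖₊) (Finset.mem_univ i))
    refine le_trans (le_of_eq ?_) h2
    push_cast; rfl
  have hg := spectrum.pow_nnnorm_pow_one_div_tendsto_nhds_spectralRadius B
  have hev : ∀ᶠ k : ℕ in atTop, (‖B ^ k‖₊ : ENNReal) ^ (1 / (k : ℝ)) < 1 :=
    hg.eventually_lt_const hρ
  obtain ⟨K0, hK0lt, hK01⟩ := (hev.and (eventually_ge_atTop 1)).exists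
  have hBK0 : ‖B ^ K0‖ < 1 := by
    have hne : (K0 : ℝ) ≠ 0 := by positivity
    have hlt : (‖B ^ K0‖₊ : ENNReal) < 1 := by
      by_contra h
      push_neg at h
      have : (1 : ENNReal) ≤ (‖B ^ K0‖₊ : ENNReal) ^ (1 / (K0:ℝ)) :=
        ENNReal.one_le_rpow h (by positivity)
      exact absurd hK0lt (not_lt.mpr this)
    have : ‖B ^ K0‖₊ < 1 := by exact_mod_cast hlt
    exact_mod_cast this
  obtain ⟨m, hm⟩ := exists_pow_lt_of_lt_one (by norm_num : (0:ℝ) < 1/2) hBK0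
  have hm1 : 1 ≤ m := by
    by_contra h
    push_neg at h
    interval_cases m
    norm_num at hm
  refine ⟨K0 * m, Nat.one_le_iff_ne_zero.mpr (by positivity), fun i => ?_⟩
  refine (hrow _ i).trans ?_
  rw [pow_mul]
  calc ‖(B ^ K0) ^ m‖ ≤ ‖B ^ K0‖ ^ m := norm_pow_le' _ (by omega)
    _ ≤ 1/2 := hm.le

/-- Asynchronous convergence: if `M` is nonnegative with `ρ(M) < 1` and every coordinate
is updated infinitely often, the asynchronous iterates converge to `(I − M)⁻¹·N`. -/
theorem stmt14 {n : ℕ} (M : Matrix (Fin n) (Fin n) ℝ) (N : Fin n → ℝ)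
    (hMnn : ∀ i j, 0 ≤ M i j)
    (hρ : spectralRadius ℂ (M.map (fun x => (x : ℂ))) < 1)
    (S : ℕ → Finset (Fin n)) (hS : ∀ k, (S k).Nonempty)
    (hinf : ∀ i : Fin n, {k : ℕ | i ∈ S k}.Infinite)
    (x : ℕ → Fin n → ℝ)
    (hupd : ∀ k i, (i ∈ S k → x (k + 1) i = (N + M.mulVec (x k)) i) ∧
                   (i ∉ S k → x (k + 1) i = x k i)) :
    Filter.Tendsto x Filter.atTop (nhds ((1 - M)⁻¹.mulVec N)) := by
  rcases Nat.eq_zero_or_pos n with hn | hn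
  · subst hn
    have : x = fun _ => (1 - M)⁻¹.mulVec N := funext fun k => Subsingleton.elim _ _
    rw [this]
    exact tendsto_const_nhds
  have hne : (Finset.univ : Finset (Fin n)).Nonempty := ⟨⟨0, hn⟩, Finset.mem_univ _⟩
  obtain ⟨i0, _⟩ := hne
  -- nonnegativity of powers
  have hpow : ∀ (k : ℕ) (i j : Fin n), 0 ≤ (M ^ k) i j := by
    intro k
    induction k with
    | zero => intro i j; by_cases h : i = j <;> simp [Matrix.one_apply, h]
    | succ k ih =>
      intro i j
      rw [pow_succ, Matrix.mul_apply]
      exact Finset.sum_nonneg fun l _ => mul_nonneg (ih i l) (hMnn l j)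
  obtain ⟨K, hK1, hKrow⟩ := stmt14_aux_rowsum M hρ
  -- the weight vector `w`
  set r : ℕ → Fin n → ℝ := fun k i => ∑ j, (M ^ k) i j with hr
  set w : Fin n → ℝ := fun i => ∑ k ∈ Finset.range K, r k i with hw
  have hr0 : ∀ i, r 0 i = 1 := by
    intro i; simp [hr, Matrix.one_apply]
  have hrnn : ∀ k i, 0 ≤ r k i := fun k i => Finset.sum_nonneg fun j _ => hpow k i j
  have hw1 : ∀ i, 1 ≤ w i := by
    intro i
    calc (1:ℝ) = r 0 i := (hr0 i).symm
      _ ≤ w i := Finset.single_le_sum (f := fun k => r k i)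
          (fun k _ => hrnn k i) (Finset.mem_range.mpr hK1)
  have hwpos : ∀ i, 0 < w i := fun i => lt_of_lt_of_le one_pos (hw1 i)
  have hMr : ∀ (k : ℕ) (i : Fin n), ∑ j, M i j * r k j = r (k+1) i := by
    intro k i
    calc ∑ j, M i j * r k j = ∑ j, ∑ l, M i j * (M ^ k) j l := by
          simp only [hr, Finset.mul_sum]
      _ = ∑ l, ∑ j, M i j * (M ^ k) j l := Finset.sum_comm
      _ = ∑ l, (M ^ (k+1)) i l := by
          refine Finset.sum_congr rfl fun l _ => ?_
          rw [pow_succ', Matrix.mul_apply]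
      _ = r (k+1) i := rfl
  have hMw : ∀ i, (M.mulVec w) i ≤ w i - 1/2 := by
    intro i
    have h1 : (M.mulVec w) i = ∑ k ∈ Finset.range K, r (k+1) i := by
      simp only [Matrix.mulVec, dotProduct, hw, Finset.mul_sum]
      rw [Finset.sum_comm]
      exact Finset.sum_congr rfl fun k _ => hMr k i
    have h2 : ∑ k ∈ Finset.range K, r (k+1) i = w i + r K i - r 0 i := by
      have := Finset.sum_range_succ' (fun k => r k i) K
      rw [Finset.sum_range_succ] at this
      linarith [this]
    rw [h1, h2, hr0 i]
    have := hKrow i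
    linarith [this]
  -- the contraction constant
  set W : ℝ := Finset.univ.sup' ⟨i0, Finset.mem_univ i0⟩ w with hWdef
  have hwW : ∀ i, w i ≤ W := fun i => Finset.le_sup' w (Finset.mem_univ i)
  have hW1 : (1:ℝ) ≤ W := le_trans (hw1 i0) (hwW i0)
  have hWpos : (0:ℝ) < W := lt_of_lt_of_le one_pos hW1
  set c : ℝ := 1 - 1/(2*W) with hcdef
  have h2Wpos : (0:ℝ) < 2*W := by linarith
  have hc0 : 0 ≤ c := by
    have : 1/(2*W) ≤ 1/2 := by
      rw [div_le_div_iff₀ h2Wpos (by norm_num)]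
      linarith
    rw [hcdef]; linarith
  have hc1 : c < 1 := by
    have : 0 < 1/(2*W) := by positivity
    rw [hcdef]; linarith
  have hMwc : ∀ i, (M.mulVec w) i ≤ c * w i := by
    intro i
    have h2 : w i / (2*W) ≤ 1/2 := by
      rw [div_le_div_iff₀ h2Wpos (by norm_num)]
      have := hwW i
      linarith
    have h3 : c * w i = w i - w i / (2*W) := by
      rw [hcdef]
      field_simp
    rw [h3]
    have := hMw i
    linarith
  -- the fixed point
  set B : Matrix (Fin n) (Fin n) ℂ := M.map (fun x => (x : ℂ)) with hB
  have h1spec : (1 : ℂ) ∉ spectrum ℂ B := by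
    intro h
    have : (1 : ENNReal) ≤ spectralRadius ℂ B := by
      have := le_iSup₂ (f := fun k (_ : k ∈ spectrum ℂ B) => (‖k‖₊ : ENNReal)) 1 h
      simp only [nnnorm_one, ENNReal.coe_one] at this
      exact this
    exact absurd hρ (not_lt.mpr this)
  have hunit : IsUnit (1 - B) := by
    rw [spectrum.mem_iff, not_not] at h1spec
    simpa using h1spec
  have hdetB : IsUnit (1 - B).det := (Matrix.isUnit_iff_isUnit_det _).mp hunit
  have hmapB : (1 : Matrix (Fin n) (Fin n) ℂ) - B = Complex.ofRealHom.mapMatrix (1 - M) := by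
    ext i j
    by_cases h : i = j <;> simp [hB, Matrix.one_apply, h, RingHom.mapMatrix_apply]
  have hdet : IsUnit (1 - M).det := by
    rw [hmapB, ← RingHom.map_det] at hdetB
    rw [isUnit_iff_ne_zero]
    intro h
    rw [h] at hdetB
    simp at hdetB
  set xs : Fin n → ℝ := (1 - M)⁻¹.mulVec N with hxs
  have hfix : ∀ i, xs i = N i + (M.mulVec xs) i := by
    have hfx : (1 - M).mulVec xs = N := by
      rw [hxs, Matrix.mulVec_mulVec, Matrix.mul_nonsing_inv _ hdet, Matrix.one_mulVec]
    intro i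
    have h := congrFun hfx i
    rw [Matrix.sub_mulVec, Matrix.one_mulVec] at h
    have h' : xs i - M.mulVec xs i = N i := h
    linarith
  -- the weighted sup distance
  set D : ℕ → ℝ := fun k => Finset.univ.sup' ⟨i0, Finset.mem_univ i0⟩
    (fun i => |x k i - xs i| / w i) with hD
  have hDnn : ∀ k, 0 ≤ D k := by
    intro k
    refine le_trans ?_ (Finset.le_sup' (fun i => |x k i - xs i| / w i) (Finset.mem_univ i0))
    exact div_nonneg (abs_nonneg _) (hwpos i0).le
  have hDle : ∀ k i, |x k i - xs i| ≤ D k * w i := by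
    intro k i
    have := Finset.le_sup' (fun i => |x k i - xs i| / w i) (Finset.mem_univ i)
    exact (div_le_iff₀ (hwpos i)).mp this
  have hstepS : ∀ k i, i ∈ S k → |x (k+1) i - xs i| ≤ c * D k * w i := by
    intro k i hi
    rw [(hupd k i).1 hi]
    have hdiff : (N + M.mulVec (x k)) i - xs i = ∑ j, M i j * (x k j - xs j) := by
      rw [hfix i]
      simp only [Pi.add_apply, Matrix.mulVec, dotProduct]
      have : ∑ j, M i j * (x k j - xs j) = ∑ j, M i j * x k j - ∑ j, M i j * xs j := by
        rw [← Finset.sum_sub_distrib]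
        exact Finset.sum_congr rfl fun j _ => by ring
      rw [this]
      ring
    rw [hdiff]
    calc |∑ j, M i j * (x k j - xs j)| ≤ ∑ j, |M i j * (x k j - xs j)| :=
          Finset.abs_sum_le_sum_abs _ _
      _ = ∑ j, M i j * |x k j - xs j| := by
          refine Finset.sum_congr rfl fun j _ => ?_
          rw [abs_mul, abs_of_nonneg (hMnn i j)]
      _ ≤ ∑ j, M i j * (D k * w j) := by
          refine Finset.sum_le_sum fun j _ => ?_
          exact mul_le_mul_of_nonneg_left (hDle k j) (hMnn i j)
      _ = D k * (M.mulVec w) i := by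
          simp only [Matrix.mulVec, dotProduct, Finset.mul_sum]
          refine Finset.sum_congr rfl fun j _ => by ring
      _ ≤ D k * (c * w i) := mul_le_mul_of_nonneg_left (hMwc i) (hDnn k)
      _ = c * D k * w i := by ring
  have hstep : ∀ k i, |x (k+1) i - xs i| ≤ D k * w i := by
    intro k i
    by_cases hi : i ∈ S k
    · refine (hstepS k i hi).trans ?_
      have h0 : 0 ≤ D k * w i := mul_nonneg (hDnn k) (hwpos i).le
      nlinarith [mul_nonneg (sub_nonneg.mpr hc1.le) h0]
    · rw [(hupd k i).2 hi]; exact hDle k i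
  have hDanti : Antitone D := by
    refine antitone_nat_of_succ_le fun k => ?_
    refine Finset.sup'_le _ _ fun i _ => ?_
    rw [div_le_iff₀ (hwpos i)]
    exact hstep k i
  have hkey : ∀ t k, ∀ i, (∃ s, t ≤ s ∧ s < k ∧ i ∈ S s) → |x k i - xs i| ≤ c * D t * w i := by
    intro t k
    induction k with
    | zero => rintro i ⟨s, _, hs, _⟩; omega
    | succ k ih =>
      rintro i ⟨s, hts, hsk, hiS⟩
      by_cases hi : i ∈ S k
      · have h1 := hstepS k i hi
        have h2 : D k ≤ D t := hDanti (by omega)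
        refine h1.trans ?_
        exact mul_le_mul_of_nonneg_right (mul_le_mul_of_nonneg_left h2 hc0) (hwpos i).le
      · have hsne : s ≠ k := fun h => hi (h ▸ hiS)
        rw [(hupd k i).2 hi]
        exact ih i ⟨s, hts, by omega, hiS⟩
  have hDkey : ∀ t k, (∀ i, ∃ s, t ≤ s ∧ s < k ∧ i ∈ S s) → D k ≤ c * D t := by
    intro t k h
    refine Finset.sup'_le _ _ fun i _ => ?_
    rw [div_le_iff₀ (hwpos i)]
    exact hkey t k i (h i)
  have hnext : ∀ t, ∃ k, t < k ∧ ∀ i, ∃ s, t ≤ s ∧ s < k ∧ i ∈ S s := by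
    intro t
    have h : ∀ i : Fin n, ∃ s, t < s ∧ i ∈ S s := by
      intro i
      obtain ⟨b, hb, hb2⟩ := (hinf i).exists_gt t
      exact ⟨b, hb2, hb⟩
    choose g hg1 hg2 using h
    refine ⟨(Finset.univ.sup g) + 1, ?_, fun i => ?_⟩
    · have := Finset.le_sup (f := g) (Finset.mem_univ i0)
      have := hg1 i0
      omega
    · refine ⟨g i, (hg1 i).le, ?_, hg2 i⟩
      have := Finset.le_sup (f := g) (Finset.mem_univ i)
      omega
  choose f hf1 hf2 using hnext
  set τ : ℕ → ℕ := fun m => Nat.rec 0 (fun _ ih => f ih) m with hτ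
  have hτsucc : ∀ m, τ (m+1) = f (τ m) := fun m => rfl
  have hgeo : ∀ m, D (τ m) ≤ c ^ m * D 0 := by
    intro m
    induction m with
    | zero => simp [hτ]
    | succ m ih =>
      rw [hτsucc]
      calc D (f (τ m)) ≤ c * D (τ m) := hDkey (τ m) _ (hf2 (τ m))
        _ ≤ c * (c ^ m * D 0) := mul_le_mul_of_nonneg_left ih hc0
        _ = c ^ (m+1) * D 0 := by ring
  have hDtend : Tendsto D atTop (nhds 0) := by
    rw [Metric.tendsto_atTop]
    intro ε hε
    have hlim : Tendsto (fun m => c ^ m * D 0) atTop (nhds 0) := by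
      have := (tendsto_pow_atTop_nhds_zero_of_lt_one hc0 hc1).mul_const (D 0)
      simpa using this
    obtain ⟨m, hm⟩ := (hlim.eventually (gt_mem_nhds hε)).exists
    refine ⟨τ m, fun k hk => ?_⟩
    rw [Real.dist_eq, sub_zero, abs_of_nonneg (hDnn k)]
    calc D k ≤ D (τ m) := hDanti hk
      _ ≤ c ^ m * D 0 := hgeo m
      _ < ε := hm
  rw [tendsto_pi_nhds]
  intro i
  rw [tendsto_iff_dist_tendsto_zero]
  have hb : Tendsto (fun k => D k * W) atTop (nhds 0) := by
    simpa using hDtend.mul_const W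
  refine squeeze_zero (fun k => dist_nonneg) (fun k => ?_) hb
  rw [Real.dist_eq]
  calc |x k i - xs i| ≤ D k * w i := hDle k i
    _ ≤ D k * W := mul_le_mul_of_nonneg_left (hwW i) (hDnn k)
end

section
/- In the multi-objective problem: minimize P1 + P2 subject to P1, P2 ≥ 0, P1 + P2 ≤ P_max, and min(V1, η1(P1)) + min(V2, η2(P2)) ≥ R*, where η_x(P) = W_x·log2(1+P/E_x) and R* = min(V1, η1(P1°)) + min(V2, η2(P2°)) is the optimal value of the rate-maximization problem, an optimal solution satisfies η_x(P_x) ≤ V_x whenever V_x ≥ 0 for x = 1,2 (i.e., it never pays to exceed the backhaul caps). -/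
lemma stmt18_key (W E V P : ℝ) (hW : 0 < W) (hE : 0 < E) (hP : 0 ≤ P) (hV : 0 ≤ V)
    (h : V < W * Real.logb 2 (1 + P / E)) :
    ∃ Q, 0 ≤ Q ∧ Q < P ∧ W * Real.logb 2 (1 + Q / E) = V := by
  refine ⟨E * ((2 : ℝ) ^ (V / W) - 1), ?_, ?_, ?_⟩
  · have h1 : (1 : ℝ) ≤ (2 : ℝ) ^ (V / W) := by
      have : (0:ℝ) ≤ V / W := div_nonneg hV hW.le
      calc (1:ℝ) = (2:ℝ) ^ (0:ℝ) := by simp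
        _ ≤ (2:ℝ) ^ (V / W) := Real.rpow_le_rpow_of_exponent_le one_le_two this
    nlinarith
  · have hcomp : 1 + E * ((2 : ℝ) ^ (V / W) - 1) / E = (2:ℝ) ^ (V / W) := by
      field_simp
      ring
    by_contra hle
    push_neg at hle
    have hmono : W * Real.logb 2 (1 + P / E) ≤ W * Real.logb 2 (1 + E * ((2 : ℝ) ^ (V / W) - 1) / E) := by
      gcongr <;> first | norm_num | positivity
    rw [hcomp, Real.logb_rpow (by norm_num : (0:ℝ) < 2) (by norm_num : (2:ℝ) ≠ 1)] at hmono
    have : W * (V / W) = V := by field_simp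
    rw [this] at hmono
    linarith
  · have hcomp : 1 + E * ((2 : ℝ) ^ (V / W) - 1) / E = (2:ℝ) ^ (V / W) := by
      field_simp
      ring
    rw [hcomp, Real.logb_rpow (by norm_num : (0:ℝ) < 2) (by norm_num : (2:ℝ) ≠ 1)]
    field_simp

/-- At an optimum of the power-minimization problem subject to achieving the capped rate
`R*`, no link's rate strictly exceeds its nonnegative backhaul cap. -/
theorem stmt18 (W1 W2 E1 E2 Pmax V1 V2 Rstar P1 P2 : ℝ)
    (hW1 : 0 < W1) (hW2 : 0 < W2) (hE1 : 0 < E1) (hE2 : 0 < E2) (hPmax : 0 < Pmax)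
    (η1 η2 : ℝ → ℝ)
    (hη1 : η1 = fun P => W1 * Real.logb 2 (1 + P / E1))
    (hη2 : η2 = fun P => W2 * Real.logb 2 (1 + P / E2))
    (hRstar : IsGreatest {r : ℝ | ∃ Q1 Q2 : ℝ, 0 ≤ Q1 ∧ 0 ≤ Q2 ∧ Q1 + Q2 ≤ Pmax ∧
        r = min V1 (η1 Q1) + min V2 (η2 Q2)} Rstar)
    (hfeas1 : 0 ≤ P1) (hfeas2 : 0 ≤ P2) (hfeas3 : P1 + P2 ≤ Pmax)
    (hrate : Rstar ≤ min V1 (η1 P1) + min V2 (η2 P2))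
    (hopt : ∀ Q1 Q2 : ℝ, 0 ≤ Q1 → 0 ≤ Q2 → Q1 + Q2 ≤ Pmax →
        Rstar ≤ min V1 (η1 Q1) + min V2 (η2 Q2) → P1 + P2 ≤ Q1 + Q2) :
    (0 ≤ V1 → η1 P1 ≤ V1) ∧ (0 ≤ V2 → η2 P2 ≤ V2) := by
  constructor
  · intro hV1
    by_contra hgt
    push_neg at hgt
    rw [hη1] at hgt
    obtain ⟨Q, hQ0, hQP, hQeq⟩ := stmt18_key W1 E1 V1 P1 hW1 hE1 hfeas1 hV1 hgt
    have hfeas : Rstar ≤ min V1 (η1 Q) + min V2 (η2 P2) := by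
      rw [hη1]
      simp only [hQeq, min_self]
      have : min V1 (η1 P1) = V1 := min_eq_left (by rw [hη1]; exact hgt.le)
      rw [this] at hrate
      exact hrate
    have := hopt Q P2 hQ0 hfeas2 (by linarith) hfeas
    linarith
  · intro hV2
    by_contra hgt
    push_neg at hgt
    rw [hη2] at hgt
    obtain ⟨Q, hQ0, hQP, hQeq⟩ := stmt18_key W2 E2 V2 P2 hW2 hE2 hfeas2 hV2 hgt
    have hfeas : Rstar ≤ min V1 (η1 P1) + min V2 (η2 Q) := by
      rw [hη2]
      simp only [hQeq, min_self]
      have : min V2 (η2 P2) = V2 := min_eq_left (by rw [hη2]; exact hgt.le)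
      rw [this] at hrate
      exact hrate
    have := hopt P1 Q hfeas1 hQ0 (by linarith) hfeas
    linarith
end
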